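/- Let G be a plane triangulation and H a connected embedded induced subgraph of G. For any face f of H, all vertices of G lying in the interior of f belong to the same connected component of G \ H. Moreover, if H consists of a single vertex with no edges, then G \ H is connected. -/

import Mathlib

/-- A combinatorial map (embedded multigraph): a finite nonempty set of darts
(oriented edges) with a fixed-point-free involution pairing darts into edges and
a rotation permutation whose orbits are the vertices; connectivity is required. -/
structure CombMap where
  D : Type
  [fintypeD : Fintype D]
  [nonemptyD : Nonempty D]
  inv : Equiv.Perm D
  inv_invol : ∀ d, inv (inv d) = d
  inv_ne : ∀ d, inv d ≠ d
  rot : Equiv.Perm D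
  conn : ∀ d d' : D,
    ∃ g ∈ Subgroup.closure ({rot, inv} : Set (Equiv.Perm D)), g d = d'

attribute [instance] CombMap.fintypeD CombMap.nonemptyD

namespace CombMap

variable (G : CombMap)

def vertexSetoid : Setoid G.D :=
  ⟨G.rot.SameCycle,
   ⟨fun _ => ⟨0, by simp⟩, Equiv.Perm.SameCycle.symm, Equiv.Perm.SameCycle.trans⟩⟩

def Vertex : Type := Quotient G.vertexSetoid

def vertexOf (d : G.D) : G.Vertex := Quotient.mk G.vertexSetoid d

/-- The facial permutation; its orbits are the faces. -/
def facePerm : Equiv.Perm G.D := G.rot * G.inv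

def faceSetoid : Setoid G.D :=
  ⟨G.facePerm.SameCycle,
   ⟨fun _ => ⟨0, by simp⟩, Equiv.Perm.SameCycle.symm, Equiv.Perm.SameCycle.trans⟩⟩

def Face : Type := Quotient G.faceSetoid

def faceOf (d : G.D) : G.Face := Quotient.mk G.faceSetoid d

def edgeSetoid : Setoid G.D :=
  ⟨fun d d' => d' = d ∨ d' = G.inv d, by
    constructor
    · exact fun x => Or.inl rfl
    · rintro x y (rfl | rfl)
      · exact Or.inl rfl
      · exact Or.inr (G.inv_invol x).symm
    · rintro x y z (rfl | rfl) h2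
      · exact h2
      · rcases h2 with rfl | rfl
        · exact Or.inr rfl
        · exact Or.inl (G.inv_invol x)⟩

def Edge : Type := Quotient G.edgeSetoid

def edgeOf (d : G.D) : G.Edge := Quotient.mk G.edgeSetoid d

noncomputable def eulerChar : ℤ :=
  (Nat.card G.Vertex : ℤ) - (Nat.card G.Edge : ℤ) + (Nat.card G.Face : ℤ)

def IsPlane : Prop := G.eulerChar = 2

def HasGenus (g : ℕ) : Prop := G.eulerChar = 2 - 2 * (g : ℤ)

def Adj (u w : G.Vertex) : Prop :=
  ∃ d, G.vertexOf d = u ∧ G.vertexOf (G.inv d) = w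

noncomputable def degree (v : G.Vertex) : ℕ := Nat.card {d : G.D // G.vertexOf d = v}

def edgeJoins (e : G.Edge) (u w : G.Vertex) : Prop :=
  ∃ d, G.edgeOf d = e ∧ G.vertexOf d = u ∧ G.vertexOf (G.inv d) = w

/-- Reachability by walks avoiding the vertex set `X`. -/
def ReachAvoiding (X : Set G.Vertex) : G.Vertex → G.Vertex → Prop :=
  Relation.ReflTransGen (fun a b => a ∉ X ∧ b ∉ X ∧ G.Adj a b)

def TwoConnected : Prop :=
  3 ≤ Nat.card G.Vertex ∧
    ∀ v u w : G.Vertex, u ≠ v → w ≠ v → G.ReachAvoiding {v} u w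

def ThreeConnected : Prop :=
  4 ≤ Nat.card G.Vertex ∧
    ∀ x y u w : G.Vertex, u ∉ ({x, y} : Set G.Vertex) →
      w ∉ ({x, y} : Set G.Vertex) → G.ReachAvoiding {x, y} u w

/-- No loops and no multiple edges. -/
def Simple : Prop :=
  (∀ d, G.vertexOf d ≠ G.vertexOf (G.inv d)) ∧
  ∀ d d', G.vertexOf d = G.vertexOf d' →
    G.vertexOf (G.inv d) = G.vertexOf (G.inv d') → G.edgeOf d = G.edgeOf d'

/-- Every facial walk has length exactly three. -/
def Triangulated : Prop :=
  ∀ d, G.facePerm d ≠ d ∧ G.facePerm (G.facePerm (G.facePerm d)) = d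

def boundaryV (f : G.Face) : Set G.Vertex :=
  {v | ∃ d, G.faceOf d = f ∧ G.vertexOf d = v}

def boundaryE (f : G.Face) : Set G.Edge :=
  {e | ∃ d, G.faceOf d = f ∧ G.edgeOf d = e}

/-- A polyhedral embedding: simple, and any two distinct faces meet in
nothing, exactly one vertex, or exactly one edge (with its two endpoints). -/
def Polyhedral : Prop :=
  G.Simple ∧ ∀ f g : G.Face, f ≠ g →
    (G.boundaryV f ∩ G.boundaryV g = ∅) ∨
    (∃ v, G.boundaryV f ∩ G.boundaryV g = {v} ∧ G.boundaryE f ∩ G.boundaryE g = ∅) ∨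
    (∃ e v w, v ≠ w ∧ G.edgeJoins e v w ∧ G.boundaryE f ∩ G.boundaryE g = {e} ∧
      G.boundaryV f ∩ G.boundaryV g = {v, w})

/-- The dual embedded graph: same darts, same edge involution, rotation given
by the facial permutation, so that vertices of the dual are faces of `G`. -/
def dual : CombMap where
  D := G.D
  fintypeD := G.fintypeD
  nonemptyD := G.nonemptyD
  inv := G.inv
  inv_invol := G.inv_invol
  inv_ne := G.inv_ne
  rot := G.facePerm
  conn := by
    intro d d'
    obtain ⟨g, hg, hgd⟩ := G.conn d d'
    refine ⟨g, ?_, hgd⟩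
    have hinv2 : G.inv * G.inv = 1 := by
      ext x
      simp [Equiv.Perm.mul_apply, G.inv_invol]
    have hrot : G.rot = G.facePerm * G.inv := by
      rw [facePerm, mul_assoc, hinv2, mul_one]
    have hsub : ({G.rot, G.inv} : Set (Equiv.Perm G.D)) ⊆
        ↑(Subgroup.closure ({G.facePerm, G.inv} : Set (Equiv.Perm G.D))) := by
      rintro x (rfl | rfl)
      · rw [SetLike.mem_coe, hrot]
        exact mul_mem (Subgroup.subset_closure (Set.mem_insert _ _))
          (Subgroup.subset_closure (Set.mem_insert_of_mem _ rfl))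
      · exact Subgroup.subset_closure (Set.mem_insert_of_mem _ rfl)
    exact (Subgroup.closure_le _).2 hsub hg

end CombMap

/-- An embedded graph whose darts are labelled by the types (in `{0,1,2}`) of
their vertices; the label is constant on rotation orbits. -/
structure LabMap extends CombMap where
  lab : D → Fin 3
  lab_rot : ∀ d, lab (rot d) = lab d

namespace LabMap

variable (G : LabMap)

lemma lab_zpow (i : ℤ) : ∀ d, G.lab ((G.rot ^ i) d) = G.lab d := by
  induction i using Int.induction_on with
  | zero => intro d; simp
  | succ n ih =>
      intro d
      have h : (G.rot ^ ((n : ℤ) + 1)) d = (G.rot ^ (n : ℤ)) (G.rot d) := by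
        rw [zpow_add, zpow_one, Equiv.Perm.mul_apply]
      rw [h, ih, G.lab_rot]
  | pred n ih =>
      intro d
      have h : (G.rot ^ (-(n : ℤ) - 1)) d = (G.rot ^ (-(n : ℤ))) (G.rot⁻¹ d) := by
        rw [sub_eq_add_neg, zpow_add, zpow_neg_one, Equiv.Perm.mul_apply]
      have h2 : G.lab (G.rot⁻¹ d) = G.lab d := by
        conv_rhs => rw [← show G.rot (G.rot⁻¹ d) = d from G.rot.apply_symm_apply d]
        rw [G.lab_rot]
      rw [h, ih, h2]

/-- The type of a vertex. -/
def vtype : G.toCombMap.Vertex → Fin 3 :=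
  Quotient.lift G.lab (by
    intro a b hab
    obtain ⟨i, hi⟩ := hab
    rw [← hi, G.lab_zpow])

/-- The type of an edge: the type in `{0,1,2}` not occurring among the types
of its two endpoints (when these are distinct). -/
def edgeType (d : G.D) : Fin 3 := -(G.lab d + G.lab (G.inv d))

/-- No edge joins two vertices of the same type. -/
def NoSameTypeEdges : Prop := ∀ d, G.lab (G.inv d) ≠ G.lab d

end LabMap

/-- Witness data exhibiting `B` as the barycentric subdivision of `G`:
type-0/1/2 vertices of `B` correspond to vertices/edges/faces of `G`, and the
edges of `B` correspond to the incidences (with multiplicity) of `G`: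
each dart of `G` gives one edge of `B` of each of the three types. -/
structure BaryStruct (G : CombMap) (B : LabMap) where
  noSame : B.NoSameTypeEdges
  tri : B.toCombMap.Triangulated
  b0 : G.Vertex → B.toCombMap.Vertex
  b1 : G.Edge → B.toCombMap.Vertex
  b2 : G.Face → B.toCombMap.Vertex
  bBij : Function.Bijective
    (Sum.elim b0 (Sum.elim b1 b2) : G.Vertex ⊕ (G.Edge ⊕ G.Face) → B.toCombMap.Vertex)
  t0 : ∀ v, B.vtype (b0 v) = 0
  t1 : ∀ e, B.vtype (b1 e) = 1
  t2 : ∀ f, B.vtype (b2 f) = 2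
  c0 : G.D → B.toCombMap.Edge
  c1 : G.D → B.toCombMap.Edge
  c2 : G.D → B.toCombMap.Edge
  j2 : ∀ d, B.toCombMap.edgeJoins (c2 d) (b0 (G.vertexOf d)) (b1 (G.edgeOf d))
  j1 : ∀ d, B.toCombMap.edgeJoins (c1 d) (b0 (G.vertexOf d)) (b2 (G.faceOf d))
  j0 : ∀ d, B.toCombMap.edgeJoins (c0 d) (b1 (G.edgeOf d)) (b2 (G.faceOf d))
  cBij : Function.Bijective
    (Sum.elim c0 (Sum.elim c1 c2) : G.D ⊕ (G.D ⊕ G.D) → B.toCombMap.Edge)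

def CombMap.IsBary (G : CombMap) (B : LabMap) : Prop := Nonempty (BaryStruct G B)

/-- A local orientation-preserving symmetry-preserving operation. -/
structure Lopsp extends LabMap where
  v0 : toCombMap.Vertex
  v1 : toCombMap.Vertex
  v2 : toCombMap.Vertex
  plane : toCombMap.IsPlane
  twoConn : toCombMap.TwoConnected
  tri : toCombMap.Triangulated
  noSame : toLabMap.NoSameTypeEdges
  t0 : toLabMap.vtype v0 ≠ 1
  t2 : toLabMap.vtype v2 ≠ 1
  deg_v1 : toLabMap.vtype v1 = 1 → toCombMap.degree v1 = 2
  deg_type1 : ∀ v, v ≠ v0 → v ≠ v1 → v ≠ v2 →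
    toLabMap.vtype v = 1 → toCombMap.degree v = 4

namespace Lopsp

/-- The lopsp-operation Dual (three vertices of types 2,1,0; three edges). -/
def IsDual (O : Lopsp) : Prop :=
  Nat.card O.toLabMap.toCombMap.Vertex = 3 ∧ Nat.card O.toLabMap.toCombMap.Edge = 3 ∧
  O.toLabMap.vtype O.v0 = 2 ∧ O.toLabMap.vtype O.v1 = 1 ∧ O.toLabMap.vtype O.v2 = 0

/-- The identity lopsp-operation (three vertices of types 0,1,2; three edges). -/
def IsIdentity (O : Lopsp) : Prop :=
  Nat.card O.toLabMap.toCombMap.Vertex = 3 ∧ Nat.card O.toLabMap.toCombMap.Edge = 3 ∧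
  O.toLabMap.vtype O.v0 = 0 ∧ O.toLabMap.vtype O.v1 = 1 ∧ O.toLabMap.vtype O.v2 = 2

def EdgeBreaking (O : Lopsp) : Prop :=
  O.toLabMap.toCombMap.Adj O.v1 O.v2 ∧ O.toLabMap.vtype O.v2 = 0

def EdgePreserving (O : Lopsp) : Prop := ¬ O.EdgeBreaking

end Lopsp

/-- Witness data exhibiting the embedded graph `H` as the result `O(G)` of
applying the lopsp-operation `O` to the embedded graph `G`: a barycentric
subdivision `B` of `H` together with the projection `p = π` onto `O`,
a chamber correspondence (chambers of `B` ↔ chambers of `O` × double chambers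
of `G`, double chambers being encoded by darts of `G`), and the
identification of the 0-, 1-, 2-points of `B` with the vertices, edges and
faces of `G`. -/
structure AppData (O : Lopsp) (G H : CombMap) where
  B : LabMap
  bary : BaryStruct H B
  p : B.D → O.toLabMap.D
  p_surj : Function.Surjective p
  p_inv : ∀ d, p (B.toCombMap.inv d) = O.toLabMap.toCombMap.inv (p d)
  p_lab : ∀ d, B.lab d = O.toLabMap.lab (p d)
  chEquiv : B.toCombMap.Face ≃ O.toLabMap.toCombMap.Face × G.D
  copy0 : G.Vertex → B.toCombMap.Vertex
  copy0_inj : Function.Injective copy0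
  copy0_spec : ∀ v : G.Vertex, ∀ d : B.D, B.toCombMap.vertexOf d = copy0 v →
    O.toLabMap.toCombMap.vertexOf (p d) = O.v0
  copy0_surj : ∀ w : B.toCombMap.Vertex,
    (∃ d, B.toCombMap.vertexOf d = w ∧ O.toLabMap.toCombMap.vertexOf (p d) = O.v0) →
    ∃ v, copy0 v = w
  copy1 : G.Edge → B.toCombMap.Vertex
  copy1_inj : Function.Injective copy1
  copy1_spec : ∀ e : G.Edge, ∀ d : B.D, B.toCombMap.vertexOf d = copy1 e →
    O.toLabMap.toCombMap.vertexOf (p d) = O.v1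
  copy1_surj : ∀ w : B.toCombMap.Vertex,
    (∃ d, B.toCombMap.vertexOf d = w ∧ O.toLabMap.toCombMap.vertexOf (p d) = O.v1) →
    ∃ e, copy1 e = w
  copy2 : G.Face → B.toCombMap.Vertex
  copy2_inj : Function.Injective copy2
  copy2_spec : ∀ f : G.Face, ∀ d : B.D, B.toCombMap.vertexOf d = copy2 f →
    O.toLabMap.toCombMap.vertexOf (p d) = O.v2
  copy2_surj : ∀ w : B.toCombMap.Vertex,
    (∃ d, B.toCombMap.vertexOf d = w ∧ O.toLabMap.toCombMap.vertexOf (p d) = O.v2) →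
    ∃ f, copy2 f = w
  incid : ∀ d : G.D, ∃ dB : B.D,
    B.toCombMap.vertexOf dB = copy0 (G.vertexOf d) ∧
    (chEquiv (B.toCombMap.faceOf dB)).2 = d

namespace AppData

variable {O : Lopsp} {G H : CombMap}

/-- The vertex-shadow `S_O(v)` of a vertex `v` of `G`: the vertices of
`O(G)` whose copy in `B_{O(G)}` is of type 0 and adjacent or equal to the
copy of `v`. -/
def shadow (A : AppData O G H) (v : G.Vertex) : Set H.Vertex :=
  {x | A.bary.b0 x = A.copy0 v ∨ A.B.toCombMap.Adj (A.bary.b0 x) (A.copy0 v)}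

/-- The face-shadow `S_O(f)` of a face `f` of `G`. -/
def fshadow (A : AppData O G H) (f : G.Face) : Set H.Vertex :=
  {x | A.bary.b0 x = A.copy2 f ∨ A.B.toCombMap.Adj (A.bary.b0 x) (A.copy2 f)}

end AppData

def Lopsp.Applies (O : Lopsp) (G H : CombMap) : Prop := Nonempty (AppData O G H)

/-- A `c3`-operation: it maps polyhedral embeddings to polyhedral embeddings. -/
def Lopsp.C3 (O : Lopsp) : Prop :=
  ∀ G H : CombMap, G.Polyhedral → O.Applies G H → H.Polyhedral

namespace CombMap

/-- The darts of the subgraph induced by the vertex set `S`. -/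
def HD (G : CombMap) (S : Set G.Vertex) : Set G.D :=
  {d | G.vertexOf d ∈ S ∧ G.vertexOf (G.inv d) ∈ S}

/-- Reachability by walks staying inside the vertex set `S`. -/
def ReachWithin (G : CombMap) (S : Set G.Vertex) : G.Vertex → G.Vertex → Prop :=
  Relation.ReflTransGen (fun a b => a ∈ S ∧ b ∈ S ∧ G.Adj a b)

open Classical in
/-- The number of rotation steps from `d` to the next dart in `A`. -/
noncomputable def stepsTo (G : CombMap) (A : Set G.D) (d : G.D) : ℕ :=
  if h : ∃ k : ℕ, 0 < k ∧ (G.rot ^ k) d ∈ A then Nat.find h else 0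

/-- The next dart of `A` after `d` in the rotation at its vertex. -/
noncomputable def nextIn (G : CombMap) (A : Set G.D) (d : G.D) : G.D :=
  (G.rot ^ G.stepsTo A d) d

/-- The facial permutation of the embedded subgraph with dart set `A`. -/
noncomputable def faceStep (G : CombMap) (A : Set G.D) (d : G.D) : G.D :=
  G.nextIn A (G.inv d)

/-- Two darts of `A` lie on the same face of the embedded subgraph `A`. -/
def SameFaceIn (G : CombMap) (A : Set G.D) : G.D → G.D → Prop :=
  Relation.EqvGen (fun a b => a ∈ A ∧ b = G.faceStep A a)

/-- The vertex `u` lies in the interior of the face of the induced embedded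
subgraph on `S` represented by the dart `d`: `u ∉ S`, and `u` belongs to a
bridge attached in an angle of that face (an angle at a boundary dart `e`
of the face, formed by darts strictly between `e` and the next induced dart
in the rotation at its vertex). -/
def InInterior (G : CombMap) (S : Set G.Vertex) (d : G.D) (u : G.Vertex) : Prop :=
  u ∉ S ∧ ∃ (e : G.D) (j : ℕ), e ∈ G.HD S ∧
    G.SameFaceIn (G.HD S) (G.inv e) d ∧
    0 < j ∧ j < G.stepsTo (G.HD S) e ∧
    (u = G.vertexOf (G.inv ((G.rot ^ j) e)) ∨
      G.ReachAvoiding S (G.vertexOf (G.inv ((G.rot ^ j) e))) u)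

end CombMap


namespace CombMap

variable (G : CombMap)

lemma vertexOf_zpow' (i : ℤ) (d : G.D) : G.vertexOf ((G.rot ^ i) d) = G.vertexOf d :=
  Quotient.sound (⟨-i, by simp [← Equiv.Perm.mul_apply, ← zpow_add]⟩ :
    G.rot.SameCycle ((G.rot ^ i) d) d)

lemma vertexOf_pow' (k : ℕ) (d : G.D) : G.vertexOf ((G.rot ^ k) d) = G.vertexOf d := by
  have := G.vertexOf_zpow' (k : ℤ) d; rwa [zpow_natCast] at this

lemma vertexOf_rot' (d : G.D) : G.vertexOf (G.rot d) = G.vertexOf d := by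
  simpa using G.vertexOf_pow' 1 d

lemma inv_inv_apply (x : G.D) : G.inv⁻¹ x = G.inv x :=
  G.inv.injective (by rw [Equiv.Perm.inv_def, Equiv.apply_symm_apply, G.inv_invol])

lemma head_rot_inv (htri : G.Triangulated) (d : G.D) :
    G.vertexOf (G.inv (G.rot (G.inv d))) = G.vertexOf (G.inv (G.rot⁻¹ d)) := by
  have hf : ∀ x, G.facePerm x = G.rot (G.inv x) := fun x => rfl
  have h3 := (htri d).2
  have h2 : G.facePerm (G.facePerm d) = G.inv (G.rot⁻¹ d) := by
    have hinv : G.facePerm⁻¹ d = G.inv (G.rot⁻¹ d) := by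
      rw [facePerm, mul_inv_rev, Equiv.Perm.mul_apply, G.inv_inv_apply]
    rw [← hinv, Equiv.Perm.inv_def, Equiv.eq_symm_apply]
    exact h3
  calc G.vertexOf (G.inv (G.rot (G.inv d)))
      = G.vertexOf (G.rot (G.inv (G.rot (G.inv d)))) := (G.vertexOf_rot' _).symm
    _ = G.vertexOf (G.inv (G.rot⁻¹ d)) := by
        rw [show G.rot (G.inv (G.rot (G.inv d))) = G.facePerm (G.facePerm d) from rfl, h2]

lemma adj_heads (htri : G.Triangulated) (d : G.D) :
    G.Adj (G.vertexOf (G.inv d)) (G.vertexOf (G.inv (G.rot⁻¹ d))) :=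
  ⟨G.rot (G.inv d), G.vertexOf_rot' _, G.head_rot_inv htri d⟩

lemma adj_symm {a b : G.Vertex} (h : G.Adj a b) : G.Adj b a := by
  obtain ⟨d, h1, h2⟩ := h
  exact ⟨G.inv d, h2, by rw [G.inv_invol]; exact h1⟩

lemma reach_symm {X : Set G.Vertex} {a b : G.Vertex} (h : G.ReachAvoiding X a b) :
    G.ReachAvoiding X b a := by
  induction h with
  | refl => exact Relation.ReflTransGen.refl
  | tail _ h2 ih => exact Relation.ReflTransGen.head ⟨h2.2.1, h2.1, G.adj_symm h2.2.2⟩ ih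

lemma exists_pow_mem {A : Set G.D} {x : G.D} (hx : x ∈ A) :
    ∃ k : ℕ, 0 < k ∧ (G.rot ^ k) x ∈ A := by
  refine ⟨orderOf G.rot, orderOf_pos _, ?_⟩
  rw [pow_orderOf_eq_one]
  simpa using hx

open Classical in
lemma stepsTo_spec {A : Set G.D} {x : G.D} (h : ∃ k, 0 < k ∧ (G.rot ^ k) x ∈ A) :
    0 < G.stepsTo A x ∧ (G.rot ^ G.stepsTo A x) x ∈ A := by
  unfold stepsTo
  rw [dif_pos h]
  exact Nat.find_spec h

open Classical in
lemma stepsTo_min' {A : Set G.D} {x : G.D} {j : ℕ} (hj : 0 < j)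
    (hlt : j < G.stepsTo A x) : (G.rot ^ j) x ∉ A := by
  intro hm
  unfold stepsTo at hlt
  split at hlt
  · exact Nat.find_min ‹_› hlt ⟨hj, hm⟩
  · omega

open Classical in
lemma stepsTo_le' {A : Set G.D} {x : G.D} {k : ℕ} (hk : 0 < k)
    (hm : (G.rot ^ k) x ∈ A) : G.stepsTo A x ≤ k := by
  unfold stepsTo
  rw [dif_pos ⟨k, hk, hm⟩]
  exact Nat.find_min' _ ⟨hk, hm⟩

open Classical in
lemma stepsTo_pos_exists {A : Set G.D} {x : G.D} (h : 0 < G.stepsTo A x) :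
    ∃ k, 0 < k ∧ (G.rot ^ k) x ∈ A := by
  by_contra hc
  unfold stepsTo at h
  rw [dif_neg hc] at h
  exact absurd h (lt_irrefl 0)

lemma hd_inv_mem {S : Set G.Vertex} {d : G.D} (h : d ∈ G.HD S) : G.inv d ∈ G.HD S :=
  ⟨h.2, by rw [G.inv_invol]; exact h.1⟩

lemma angle_not_mem {S : Set G.Vertex} {e : G.D} (he : G.vertexOf e ∈ S) {j : ℕ}
    (hj : 0 < j) (hlt : j < G.stepsTo (G.HD S) e) :
    G.vertexOf (G.inv ((G.rot ^ j) e)) ∉ S := fun hm =>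
  G.stepsTo_min' hj hlt ⟨by rw [G.vertexOf_pow']; exact he, hm⟩

lemma rot_inv_pow_succ (x : G.D) (k : ℕ) : G.rot⁻¹ ((G.rot ^ (k + 1)) x) = (G.rot ^ k) x := by
  rw [pow_succ']
  simp [Equiv.Perm.mul_apply]

lemma angle_reach (htri : G.Triangulated) {S : Set G.Vertex} {e : G.D}
    (he : G.vertexOf e ∈ S) {i j : ℕ} (hi : 0 < i) (hij : i ≤ j)
    (hj : j < G.stepsTo (G.HD S) e) :
    G.ReachAvoiding S (G.vertexOf (G.inv ((G.rot ^ i) e)))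
      (G.vertexOf (G.inv ((G.rot ^ j) e))) := by
  induction j with
  | zero => omega
  | succ j ih =>
    rcases Nat.lt_or_ge i (j + 1) with hlt | hge
    · have hij' : i ≤ j := by omega
      have hjlt : j < G.stepsTo (G.HD S) e := by omega
      refine (ih hij' hjlt).trans ?_
      refine G.reach_symm (Relation.ReflTransGen.single ⟨?_, ?_, ?_⟩)
      · exact G.angle_not_mem he (by omega) hj
      · exact G.angle_not_mem he (by omega) hjlt
      · have h := G.adj_heads htri ((G.rot ^ (j + 1)) e)
        rwa [G.rot_inv_pow_succ] at h
    · have : i = j + 1 := by omega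
      subst this
      exact Relation.ReflTransGen.refl

lemma corner_eq (htri : G.Triangulated) {S : Set G.Vertex} {e : G.D} (heA : e ∈ G.HD S) :
    G.vertexOf (G.inv (G.rot (G.inv ((G.rot ^ G.stepsTo (G.HD S) e) e)))) =
      G.vertexOf (G.inv ((G.rot ^ (G.stepsTo (G.HD S) e - 1)) e)) := by
  have hpos : 0 < G.stepsTo (G.HD S) e := (G.stepsTo_spec (G.exists_pow_mem heA)).1
  obtain ⟨m, hm⟩ : ∃ m, G.stepsTo (G.HD S) e = m + 1 :=
    ⟨G.stepsTo (G.HD S) e - 1, by omega⟩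
  rw [hm, Nat.add_sub_cancel]
  have h := G.head_rot_inv htri ((G.rot ^ (m + 1)) e)
  rwa [G.rot_inv_pow_succ] at h

lemma corner_steps_ge (htri : G.Triangulated) {S : Set G.Vertex} {e : G.D}
    (heA : e ∈ G.HD S) (h2 : 2 ≤ G.stepsTo (G.HD S) e) :
    2 ≤ G.stepsTo (G.HD S) (G.inv ((G.rot ^ G.stepsTo (G.HD S) e) e)) := by
  have he' : (G.rot ^ G.stepsTo (G.HD S) e) e ∈ G.HD S :=
    (G.stepsTo_spec (G.exists_pow_mem heA)).2
  have hie' : G.inv ((G.rot ^ G.stepsTo (G.HD S) e) e) ∈ G.HD S := G.hd_inv_mem he'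
  have hpos : 0 < G.stepsTo (G.HD S) (G.inv ((G.rot ^ G.stepsTo (G.HD S) e) e)) :=
    (G.stepsTo_spec (G.exists_pow_mem hie')).1
  by_contra hlt
  have h1 : G.stepsTo (G.HD S) (G.inv ((G.rot ^ G.stepsTo (G.HD S) e) e)) = 1 := by omega
  have hmem : (G.rot ^ G.stepsTo (G.HD S) (G.inv ((G.rot ^ G.stepsTo (G.HD S) e) e)))
      (G.inv ((G.rot ^ G.stepsTo (G.HD S) e) e)) ∈ G.HD S :=
    (G.stepsTo_spec (G.exists_pow_mem hie')).2
  rw [h1, pow_one] at hmem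
  have hS : G.vertexOf (G.inv (G.rot (G.inv ((G.rot ^ G.stepsTo (G.HD S) e) e)))) ∈ S :=
    hmem.2
  rw [G.corner_eq htri heA] at hS
  exact G.angle_not_mem (j := G.stepsTo (G.HD S) e - 1) heA.1 (by omega) (by omega) hS

lemma corner_steps_one (htri : G.Triangulated) {S : Set G.Vertex} {e : G.D}
    (heA : e ∈ G.HD S) (h1 : G.stepsTo (G.HD S) e = 1) :
    G.stepsTo (G.HD S) (G.inv ((G.rot ^ G.stepsTo (G.HD S) e) e)) = 1 := by
  have he' : (G.rot ^ G.stepsTo (G.HD S) e) e ∈ G.HD S :=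
    (G.stepsTo_spec (G.exists_pow_mem heA)).2
  have hie' : G.inv ((G.rot ^ G.stepsTo (G.HD S) e) e) ∈ G.HD S := G.hd_inv_mem he'
  have hpos : 0 < G.stepsTo (G.HD S) (G.inv ((G.rot ^ G.stepsTo (G.HD S) e) e)) :=
    (G.stepsTo_spec (G.exists_pow_mem hie')).1
  have heq := G.corner_eq htri heA
  rw [h1] at heq
  simp only [Nat.sub_self, pow_zero, Equiv.Perm.one_apply] at heq
  have hmem : (G.rot ^ 1) (G.inv ((G.rot ^ G.stepsTo (G.HD S) e) e)) ∈ G.HD S := by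
    rw [pow_one]
    constructor
    · rw [G.vertexOf_rot']
      exact hie'.1
    · rw [h1, heq]
      exact heA.2
  have hle := G.stepsTo_le' one_pos hmem
  omega

/-- The angle vertices of the face dart `x` of the induced subgraph on `S`. -/
def AngV (S : Set G.Vertex) (x : G.D) (u : G.Vertex) : Prop :=
  ∃ j : ℕ, 0 < j ∧ j < G.stepsTo (G.HD S) (G.inv x) ∧
    u = G.vertexOf (G.inv ((G.rot ^ j) (G.inv x)))

lemma ang_reach (htri : G.Triangulated) {S : Set G.Vertex} {x : G.D} {u v : G.Vertex}
    (hu : G.AngV S x u) (hv : G.AngV S x v) : G.ReachAvoiding S u v := by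
  obtain ⟨i, hi, hilt, rfl⟩ := hu
  obtain ⟨j, hj, hjlt, rfl⟩ := hv
  have hpos : 0 < G.stepsTo (G.HD S) (G.inv x) := lt_trans hi hilt
  obtain ⟨k, hk, hkm⟩ := G.stepsTo_pos_exists hpos
  have he : G.vertexOf (G.inv x) ∈ S := by
    have h := hkm.1
    rwa [G.vertexOf_pow'] at h
  rcases le_total i j with h | h
  · exact G.angle_reach htri he hi h hjlt
  · exact G.reach_symm (G.angle_reach htri he hj h hilt)

lemma face_reach (htri : G.Triangulated) (S : Set G.Vertex) {x y : G.D}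
    (h : G.SameFaceIn (G.HD S) x y) :
    ((∃ u, G.AngV S x u) ↔ (∃ u, G.AngV S y u)) ∧
    ∀ u v, G.AngV S x u → G.AngV S y v → G.ReachAvoiding S u v := by
  induction h with
  | rel a b hab =>
    obtain ⟨haA, rfl⟩ := hab
    simp only [faceStep, nextIn]
    have heA : G.inv a ∈ G.HD S := G.hd_inv_mem haA
    have hpos : 0 < G.stepsTo (G.HD S) (G.inv a) :=
      (G.stepsTo_spec (G.exists_pow_mem heA)).1
    by_cases h2 : 2 ≤ G.stepsTo (G.HD S) (G.inv a)
    · have hge := G.corner_steps_ge htri heA h2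
      have hsx : G.AngV S a
          (G.vertexOf (G.inv ((G.rot ^ (G.stepsTo (G.HD S) (G.inv a) - 1)) (G.inv a)))) :=
        ⟨G.stepsTo (G.HD S) (G.inv a) - 1, by omega, by omega, rfl⟩
      have hsy : G.AngV S ((G.rot ^ G.stepsTo (G.HD S) (G.inv a)) (G.inv a))
          (G.vertexOf (G.inv ((G.rot ^ (G.stepsTo (G.HD S) (G.inv a) - 1)) (G.inv a)))) := by
        refine ⟨1, one_pos, by omega, ?_⟩
        rw [pow_one]
        exact (G.corner_eq htri heA).symm
      refine ⟨⟨fun _ => ⟨_, hsy⟩, fun _ => ⟨_, hsx⟩⟩, fun p q hp hq => ?_⟩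
      exact (G.ang_reach htri hp hsx).trans (G.ang_reach htri hsy hq)
    · have h1 : G.stepsTo (G.HD S) (G.inv a) = 1 := by omega
      have hb1 := G.corner_steps_one htri heA h1
      constructor
      · constructor
        · rintro ⟨p, j, hj, hjl, -⟩
          rw [h1] at hjl
          omega
        · rintro ⟨p, j, hj, hjl, -⟩
          rw [hb1] at hjl
          omega
      · rintro p q ⟨j, hj, hjl, -⟩
        rw [h1] at hjl
        omega
  | refl a => exact ⟨Iff.rfl, fun u v hu hv => G.ang_reach htri hu hv⟩
  | symm a b _ ih =>
    exact ⟨ih.1.symm, fun u v hu hv => G.reach_symm (ih.2 v u hv hu)⟩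
  | trans a b c _ _ ih1 ih2 =>
    refine ⟨ih1.1.trans ih2.1, fun u v hu hv => ?_⟩
    obtain ⟨w, hw⟩ := ih1.1.mp ⟨u, hu⟩
    exact (ih1.2 u w hu hw).trans (ih2.2 w v hw hv)

lemma reach_all_darts (P : G.D → Prop)
    (hrot : ∀ x, P x ↔ P (G.rot x)) (hinv : ∀ x, P x ↔ P (G.inv x))
    {a b : G.D} (ha : P a) : P b := by
  have hiff : ∀ g ∈ Subgroup.closure ({G.rot, G.inv} : Set (Equiv.Perm G.D)),
      ∀ x, P x ↔ P (g x) := by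
    intro g hg
    induction hg using Subgroup.closure_induction with
    | mem y hy =>
      rw [Set.mem_insert_iff, Set.mem_singleton_iff] at hy
      rcases hy with rfl | rfl
      · exact hrot
      · exact hinv
    | one => intro x; rw [Equiv.Perm.one_apply]
    | mul y z hy hz ihy ihz =>
      intro x
      rw [Equiv.Perm.mul_apply]
      exact (ihz x).trans (ihy (z x))
    | inv y hy ih =>
      intro x
      have h := ih (y⁻¹ x)
      simp only [Equiv.Perm.inv_def, Equiv.apply_symm_apply] at h
      exact h.symm
  obtain ⟨g, hg, hgab⟩ := G.conn a b
  have h2 := (hiff g hg a).mp ha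
  rwa [hgab] at h2

end CombMap

/-- Let `G` be a plane triangulation and `H` the connected induced
embedded subgraph on a vertex set `S`. For any face of `H` (represented by a
dart `d` of `H`), all vertices of `G` lying in the interior of that face belong
to the same connected component of `G \ H`; moreover if `H` is a single vertex
with no edges then `G \ H` is connected. -/
theorem interior_in_one_component (G : CombMap) (hpl : G.IsPlane)
    (htri : G.Triangulated) (S : Set G.Vertex) (hne : S.Nonempty)
    (hconn : ∀ u ∈ S, ∀ w ∈ S, G.ReachWithin S u w) :
    (∀ d u w, d ∈ G.HD S → G.InInterior S d u → G.InInterior S d w →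
        G.ReachAvoiding S u w) ∧
    (∀ v0 : G.Vertex, S = {v0} → G.HD S = ∅ →
        ∀ u w : G.Vertex, u ≠ v0 → w ≠ v0 → G.ReachAvoiding S u w) := by
  constructor
  · intro d u w hdA hu hw
    obtain ⟨huS, e1, j1, he1, hf1, hj1, hj1', hc1⟩ := hu
    obtain ⟨hwS, e2, j2, he2, hf2, hj2, hj2', hc2⟩ := hw
    have hface : G.SameFaceIn (G.HD S) (G.inv e1) (G.inv e2) :=
      Relation.EqvGen.trans _ _ _ hf1 (Relation.EqvGen.symm _ _ hf2)
    have ha1 : G.AngV S (G.inv e1) (G.vertexOf (G.inv ((G.rot ^ j1) e1))) :=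
      ⟨j1, hj1, by rw [G.inv_invol]; exact hj1', by rw [G.inv_invol]⟩
    have ha2 : G.AngV S (G.inv e2) (G.vertexOf (G.inv ((G.rot ^ j2) e2))) :=
      ⟨j2, hj2, by rw [G.inv_invol]; exact hj2', by rw [G.inv_invol]⟩
    have hr := (G.face_reach htri S hface).2 _ _ ha1 ha2
    have hu1 : G.ReachAvoiding S (G.vertexOf (G.inv ((G.rot ^ j1) e1))) u := by
      rcases hc1 with rfl | h
      · exact Relation.ReflTransGen.refl
      · exact h
    have hw1 : G.ReachAvoiding S (G.vertexOf (G.inv ((G.rot ^ j2) e2))) w := by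
      rcases hc2 with rfl | h
      · exact Relation.ReflTransGen.refl
      · exact h
    exact (G.reach_symm hu1).trans (hr.trans hw1)
  · intro v0 hS hHD u w hu hw
    subst hS
    have noloop : ∀ x : G.D, G.vertexOf x = v0 → G.vertexOf (G.inv x) ≠ v0 := by
      intro x hx hx'
      have hm : x ∈ G.HD {v0} := ⟨by simp [hx], by simp [hx']⟩
      rw [hHD] at hm
      exact hm
    have chainN : ∀ x : G.D, G.vertexOf x = v0 → ∀ k : ℕ,
        G.ReachAvoiding {v0} (G.vertexOf (G.inv x)) (G.vertexOf (G.inv ((G.rot ^ k) x))) := by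
      intro x hx k
      induction k with
      | zero =>
        simp only [pow_zero, Equiv.Perm.one_apply]
        exact Relation.ReflTransGen.refl
      | succ k ih =>
        refine ih.trans (G.reach_symm (Relation.ReflTransGen.single ⟨?_, ?_, ?_⟩))
        · simpa using noloop _ (by rw [G.vertexOf_pow']; exact hx)
        · simpa using noloop _ (by rw [G.vertexOf_pow']; exact hx)
        · have h := G.adj_heads htri ((G.rot ^ (k + 1)) x)
          rwa [G.rot_inv_pow_succ] at h
    have chainZ : ∀ x : G.D, G.vertexOf x = v0 → ∀ i : ℤ,
        G.ReachAvoiding {v0} (G.vertexOf (G.inv x)) (G.vertexOf (G.inv ((G.rot ^ i) x))) := by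
      intro x hx i
      rcases le_or_gt 0 i with hi | hi
      · obtain ⟨k, rfl⟩ := Int.eq_ofNat_of_zero_le hi
        rw [zpow_natCast]
        exact chainN x hx k
      · have hyv : G.vertexOf ((G.rot ^ i) x) = v0 := by rw [G.vertexOf_zpow']; exact hx
        have hyx : (G.rot ^ (-i).toNat) ((G.rot ^ i) x) = x := by
          have hti : ((-i).toNat : ℤ) = -i := Int.toNat_of_nonneg (by omega)
          rw [← zpow_natCast, ← Equiv.Perm.mul_apply, ← zpow_add, hti]
          simp
        have h := chainN ((G.rot ^ i) x) hyv (-i).toNat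
        rw [hyx] at h
        exact G.reach_symm h
    have hd0 : G.vertexOf (Quotient.out v0) = v0 := Quotient.out_eq v0
    have hn0 : G.vertexOf (G.inv (Quotient.out v0)) ≠ v0 := noloop _ hd0
    have hnbr : ∀ x : G.D, G.vertexOf x = v0 →
        G.ReachAvoiding {v0} (G.vertexOf (G.inv x))
          (G.vertexOf (G.inv (Quotient.out v0))) := by
      intro x hx
      have hsc : G.rot.SameCycle (Quotient.out v0) x :=
        Quotient.exact (hd0.trans hx.symm)
      obtain ⟨i, hi⟩ := hsc
      have h := chainZ (Quotient.out v0) hd0 i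
      rw [hi] at h
      exact G.reach_symm h
    have hstep : ∀ x : G.D, (G.vertexOf x = v0 ∨
        G.ReachAvoiding {v0} (G.vertexOf x) (G.vertexOf (G.inv (Quotient.out v0)))) →
        (G.vertexOf (G.inv x) = v0 ∨
        G.ReachAvoiding {v0} (G.vertexOf (G.inv x))
          (G.vertexOf (G.inv (Quotient.out v0)))) := by
      intro x hx
      by_cases h1 : G.vertexOf x = v0
      · exact Or.inr (hnbr x h1)
      · have hr := hx.resolve_left h1
        by_cases h2 : G.vertexOf (G.inv x) = v0
        · exact Or.inl h2
        · refine Or.inr (Relation.ReflTransGen.head ⟨?_, ?_, ?_⟩ hr)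
          · simpa using h2
          · simpa using h1
          · exact ⟨G.inv x, rfl, by rw [G.inv_invol]⟩
    have key : ∀ x : G.D, G.vertexOf x ≠ v0 →
        G.ReachAvoiding {v0} (G.vertexOf x) (G.vertexOf (G.inv (Quotient.out v0))) := by
      intro x hxv
      have hP := G.reach_all_darts (fun y => G.vertexOf y = v0 ∨
          G.ReachAvoiding {v0} (G.vertexOf y) (G.vertexOf (G.inv (Quotient.out v0))))
        (fun y => by simp only [G.vertexOf_rot'])
        (fun y => ⟨hstep y, fun h => by
          have h2 := hstep (G.inv y) h
          rwa [G.inv_invol] at h2⟩)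
        (a := Quotient.out v0) (b := x) (Or.inl hd0)
      exact hP.resolve_left hxv
    have hout : ∀ q : G.Vertex, G.vertexOf (Quotient.out q) = q := fun q => Quotient.out_eq q
    have hun := key (Quotient.out u) (by rw [hout]; exact hu)
    have hwn := key (Quotient.out w) (by rw [hout]; exact hw)
    rw [hout] at hun hwn
    exact hun.trans (G.reach_symm hwn)
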